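/- The number of Catalan tableaux of index n is the Catalan number C_n. -/

import Mathlib

/-- A Catalan tableau: a Young diagram (in English notation, rows downwards)
filled with 0/1 (`true` = 1) such that every column except the leftmost contains
exactly one 1, the leftmost column contains no 1, and no 0 has both a 1 above it
in its column and a 1 to its left in its row. -/
structure CatalanTableau where
  shape : YoungDiagram
  filling : ℕ × ℕ → Bool
  supp : ∀ c, c ∉ shape → filling c = false
  shape_nonempty : shape.cells.Nonempty
  leftCol : ∀ i, filling (i, 0) = false
  colHasOne : ∀ j, 0 < j → j < shape.rowLen 0 → ∃! i, filling (i, j) = true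
  noBadZero : ∀ i j, (i, j) ∈ shape → filling (i, j) = false →
      (∃ i' < i, filling (i', j) = true) → ¬ ∃ j' < j, filling (i, j') = true

/-- the index of a Catalan tableau: (number of rows) + (number of columns) - 1. -/
def CatalanTableau.index (t : CatalanTableau) : ℕ :=
  t.shape.colLen 0 + t.shape.rowLen 0 - 1



namespace CatalanTab

/-- A "column" of a tableau: (height, position of the 1). -/
abbrev Col := ℕ × ℕ

/-- Relation between an earlier column `p` and a later column `q`. -/
def Rel (p q : Col) : Prop := q.1 ≤ p.1 ∧ (p.2 ≤ q.2 ∨ q.1 ≤ p.2)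

/-- Validity of a list of columns. -/
def Valid (l : List Col) : Prop := l.Pairwise Rel ∧ ∀ p ∈ l, p.2 < p.1

/-- Partial tableaux with `s` columns, each of height at most `h` (first column
height at most `h`, and heights are non-increasing). -/
def PT (s h : ℕ) : Type :=
  { l : List Col // Valid l ∧ l.length = s ∧ ∀ p ∈ l.head?, p.1 ≤ h }

lemma all_le {l : List Col} {h : ℕ} (hv : l.Pairwise Rel)
    (hh : ∀ p ∈ l.head?, p.1 ≤ h) : ∀ p ∈ l, p.1 ≤ h := by
  cases l with
  | nil => simp
  | cons a t =>
    intro p hp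
    have ha : a.1 ≤ h := hh a rfl
    rcases List.mem_cons.mp hp with rfl | hp
    · exact ha
    · exact le_trans ((List.pairwise_cons.mp hv).1 p hp).1 ha

lemma PT.all_le' {s h : ℕ} (x : PT s h) : ∀ p ∈ x.1, p.1 ≤ h :=
  all_le x.2.1.1 x.2.2.2

instance PT.finite (s h : ℕ) : Finite (PT s h) := by
  classical
  have hb : ∀ (x : PT s h) (i : Fin s), i.1 < x.1.length := fun x i => by
    rw [x.2.2.1]; exact i.2
  let f : PT s h → (Fin s → Fin (h+1) × Fin (h+1)) := fun x i =>
    (⟨(x.1[i.1]'(hb x i)).1, by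
        have := x.all_le' _ (List.getElem_mem (hb x i)); omega⟩,
     ⟨(x.1[i.1]'(hb x i)).2, by
        have h1 := x.all_le' _ (List.getElem_mem (hb x i))
        have h2 := x.2.1.2 _ (List.getElem_mem (hb x i)); omega⟩)
  apply Finite.of_injective f
  intro x y hxy
  apply Subtype.ext
  apply List.ext_getElem (by rw [x.2.2.1, y.2.2.1])
  intro i h1 h2
  have hi : i < s := by rw [← x.2.2.1]; exact h1
  have := congrFun hxy ⟨i, hi⟩
  simp only [f, Prod.mk.injEq, Fin.mk.injEq] at this
  exact Prod.ext this.1 this.2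

lemma card_PT_zero (h : ℕ) : Nat.card (PT 0 h) = 1 := by
  have : Unique (PT 0 h) :=
    { default := ⟨[], ⟨⟨List.Pairwise.nil, by simp⟩, rfl, by simp⟩⟩,
      uniq := fun x => Subtype.ext (List.length_eq_zero_iff.mp x.2.2.1) }
  exact Nat.card_unique

/-- The counting function. -/
def G : ℕ → ℕ → ℕ
  | 0, _ => 1
  | s+1, h => ∑ c : Fin h, ∑ r : Fin (c.1+1), ∑ a : Fin (s+1),
      G a.1 (c.1+1 - r.1) * G (s - a.1) r.1
termination_by s _ => s
decreasing_by
  · exact a.2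
  · omega

/-- The decomposition type. -/
def Dec (s h : ℕ) : Type :=
  Σ c : Fin h, Σ r : Fin (c.1+1), Σ a : Fin (s+1),
    PT a.1 (c.1+1 - r.1) × PT (s - a.1) r.1

def up (r : ℕ) (l : List Col) : List Col := l.map fun p => (p.1 + r, p.2 + r)
def down (r : ℕ) (l : List Col) : List Col := l.map fun p => (p.1 - r, p.2 - r)

def bwdList (c r : ℕ) (hi lo : List Col) : List Col := (c, r) :: (up r hi ++ lo)

lemma mem_up {r : ℕ} {l : List Col} {q : Col} :
    q ∈ up r l ↔ ∃ p ∈ l, (p.1 + r, p.2 + r) = q := by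
  simp [up]

lemma takeWhile_append_all {p : Col → Bool} {l₁ l₂ : List Col}
    (h : ∀ x ∈ l₁, p x = true) :
    (l₁ ++ l₂).takeWhile p = l₁ ++ l₂.takeWhile p := by
  induction l₁ with
  | nil => simp
  | cons a t ih =>
    simp only [List.cons_append, List.takeWhile_cons, h a (by simp), if_true]
    rw [ih fun x hx => h x (by simp [hx])]

lemma dropWhile_append_all {p : Col → Bool} {l₁ l₂ : List Col}
    (h : ∀ x ∈ l₁, p x = true) :
    (l₁ ++ l₂).dropWhile p = l₂.dropWhile p := by
  induction l₁ with
  | nil => simp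
  | cons a t ih =>
    simp only [List.cons_append, List.dropWhile_cons, h a (by simp), if_true]
    exact ih fun x hx => h x (by simp [hx])

lemma takeWhile_eq_nil_of_all {p : Col → Bool} {l : List Col}
    (h : ∀ x ∈ l, p x = false) : l.takeWhile p = [] := by
  cases l with
  | nil => rfl
  | cons a t => simp [List.takeWhile_cons, h a (by simp)]

lemma dropWhile_eq_self_of_all {p : Col → Bool} {l : List Col}
    (h : ∀ x ∈ l, p x = false) : l.dropWhile p = l := by
  cases l with
  | nil => rfl
  | cons a t => simp [List.dropWhile_cons, h a (by simp)]

lemma head?_dropWhile {p : Col → Bool} {l : List Col} :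
    ∀ q ∈ (l.dropWhile p).head?, p q = false := by
  induction l with
  | nil => simp
  | cons a t ih =>
    intro q hq
    rw [List.dropWhile_cons] at hq
    by_cases hpa : p a
    · rw [if_pos hpa] at hq; exact ih q hq
    · rw [if_neg hpa] at hq
      simp only [List.head?_cons, Option.mem_def, Option.some.injEq] at hq
      subst hq
      exact Bool.not_eq_true _ |>.mp hpa

/-- The key structure lemma: `bwdList` of valid parts is valid. -/
lemma bwd_valid {c r : ℕ} {hi lo : List Col} (hcr : r < c)
    (hhi : Valid hi) (hlo : Valid lo)
    (hhib : ∀ p ∈ hi, p.1 ≤ c - r) (hlob : ∀ p ∈ lo, p.1 ≤ r) :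
    Valid (bwdList c r hi lo) := by
  have hupmem : ∀ q ∈ up r hi, r + 1 ≤ q.1 ∧ q.1 ≤ c ∧ r ≤ q.2 ∧ q.2 < q.1 := by
    intro q hq
    rcases mem_up.mp hq with ⟨p, hp, rfl⟩
    have h1 := hhi.2 p hp
    have h2 := hhib p hp
    simp only
    omega
  have hlomem : ∀ q ∈ lo, q.1 ≤ r ∧ q.2 < q.1 := fun q hq =>
    ⟨hlob q hq, hlo.2 q hq⟩
  constructor
  · rw [bwdList, List.pairwise_cons]
    constructor
    · intro q hq
      rcases List.mem_append.mp hq with hq | hq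
      · have := hupmem q hq
        exact ⟨by omega, Or.inl (by omega)⟩
      · have := hlomem q hq
        exact ⟨by omega, Or.inr (by omega)⟩
    · rw [List.pairwise_append]
      refine ⟨?_, hlo.1, ?_⟩
      · rw [up, List.pairwise_map]
        refine hhi.1.imp ?_
        rintro p q ⟨h1, h2⟩
        exact ⟨by omega, by omega⟩
      · intro x hx y hy
        have h1 := hupmem x hx
        have h2 := hlomem y hy
        exact ⟨by omega, Or.inr (by omega)⟩
  · intro p hp
    rcases List.mem_cons.mp hp with rfl | hp
    · exact hcr
    · rcases List.mem_append.mp hp with hp | hp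
      · exact (hupmem p hp).2.2.2
      · exact (hlomem p hp).2

lemma bwd_length {c r : ℕ} {hi lo : List Col} :
    (bwdList c r hi lo).length = hi.length + lo.length + 1 := by
  simp [bwdList, up]

/-- the backward map of the decomposition. -/
def bwd (s h : ℕ) : Dec s h → PT (s+1) h
  | ⟨c, r, a, (x, y)⟩ =>
    ⟨bwdList (c.1+1) r.1 x.1 y.1, by
      have hv := bwd_valid (c := c.1+1) (r := r.1) (hi := x.1) (lo := y.1)
        (by omega) x.2.1 y.2.1
        (by have := x.all_le' ; simpa using this)
        (y.all_le')
      refine ⟨hv, ?_, ?_⟩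
      · rw [bwd_length, x.2.2.1, y.2.2.1]
        have := a.2; omega
      · intro p hp
        simp only [bwdList, List.head?_cons, Option.mem_def, Option.some.injEq] at hp
        subst hp
        have := c.2; simp⟩

end CatalanTab

namespace CatalanTab

lemma up_injective (r : ℕ) : Function.Injective (up r) := by
  apply List.map_injective_iff.mpr
  intro p q hpq
  simp only [Prod.mk.injEq] at hpq
  exact Prod.ext (by omega) (by omega)

lemma takeWhile_up_append {r : ℕ} {hi lo : List Col}
    (hhi : ∀ p ∈ hi, p.2 < p.1) (hlo : ∀ p ∈ lo, p.1 ≤ r) :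
    (up r hi ++ lo).takeWhile (fun q => decide (r < q.1)) = up r hi ∧
    (up r hi ++ lo).dropWhile (fun q => decide (r < q.1)) = lo := by
  have h1 : ∀ x ∈ up r hi, (fun q : Col => decide (r < q.1)) x = true := by
    intro x hx
    rcases mem_up.mp hx with ⟨p, hp, rfl⟩
    have := hhi p hp
    simp only [decide_eq_true_eq]
    omega
  have h2 : ∀ x ∈ lo, (fun q : Col => decide (r < q.1)) x = false := by
    intro x hx
    have := hlo x hx
    simp only [decide_eq_false_iff_not]
    omega
  constructor
  · rw [takeWhile_append_all h1, takeWhile_eq_nil_of_all h2, List.append_nil]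
  · rw [dropWhile_append_all h1, dropWhile_eq_self_of_all h2]

lemma bwd_injective (s h : ℕ) : Function.Injective (bwd s h) := by
  rintro ⟨c, r, a, x, y⟩ ⟨c', r', a', x', y'⟩ heq
  have heq2 := congrArg Subtype.val heq
  simp only [bwd, bwdList, List.cons.injEq, Prod.mk.injEq] at heq2
  obtain ⟨⟨hc, hr⟩, htail⟩ := heq2
  have hc' : c = c' := Fin.ext (by omega)
  subst hc'
  have hr' : r = r' := Fin.ext hr
  subst hr'
  have ht1 := takeWhile_up_append (r := r.1) (hi := x.1) (lo := y.1)
    (fun p hp => x.2.1.2 p hp) y.all_le'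
  have ht2 := takeWhile_up_append (r := r.1) (hi := x'.1) (lo := y'.1)
    (fun p hp => x'.2.1.2 p hp) y'.all_le'
  have hx : x.1 = x'.1 := by
    apply up_injective r.1
    rw [← ht1.1, ← ht2.1, htail]
  have hy : y.1 = y'.1 := by rw [← ht1.2, ← ht2.2, htail]
  have ha : a = a' := Fin.ext (by rw [← x.2.2.1, ← x'.2.2.1, hx])
  subst ha
  have hx' : x = x' := Subtype.ext hx
  have hy' : y = y' := Subtype.ext hy
  rw [hx', hy']

lemma bwd_surjective (s h : ℕ) : Function.Surjective (bwd s h) := by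
  rintro ⟨l, hv, hlen, hhead⟩
  match l, hlen with
  | (c, r) :: t, hlen =>
  have hlent : t.length = s := by simpa using hlen
  have hrc : r < c := hv.2 (c, r) List.mem_cons_self
  have hch : c ≤ h := hhead _ rfl
  have hpc := List.pairwise_cons.mp hv.1
  set pb : Col → Bool := fun q => decide (r < q.1) with hpb
  set hi := t.takeWhile pb with hhi
  set lo := t.dropWhile pb with hlo
  have hhimem : ∀ q ∈ hi, q ∈ t := fun q hq => (List.takeWhile_sublist pb).subset hq
  have hhif : ∀ q ∈ hi, r < q.1 ∧ r ≤ q.2 ∧ q.2 < q.1 ∧ q.1 ≤ c := by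
    intro q hq
    have hq1 : r < q.1 := by
      have := List.mem_takeWhile_imp hq
      simpa [hpb] using this
    have hq2 := hpc.1 q (hhimem q hq)
    have hq3 := hv.2 q (List.mem_cons_of_mem _ (hhimem q hq))
    rcases hq2.2 with h' | h' <;> [skip; omega]
    exact ⟨hq1, h', hq3, hq2.1⟩
  have hlomem : ∀ q ∈ lo, q ∈ t := fun q hq => (List.dropWhile_sublist pb).subset hq
  have hlolen : hi.length + lo.length = s := by
    have := congrArg List.length (List.takeWhile_append_dropWhile (p := pb) (l := t))
    simp only [List.length_append] at this
    rw [hhi, hlo]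
    omega
  have hipair : hi.Pairwise Rel := hpc.2.sublist (List.takeWhile_sublist pb)
  have lopair : lo.Pairwise Rel := hpc.2.sublist (List.dropWhile_sublist pb)
  -- components
  have hc1 : c - 1 < h := by omega
  have hr1 : r < (c-1) + 1 := by omega
  have hall : hi.length < s + 1 := by
    have : hi.length ≤ t.length := (List.takeWhile_sublist pb).length_le
    omega
  refine ⟨⟨⟨c - 1, hc1⟩, ⟨r, hr1⟩, ⟨hi.length, hall⟩,
    ⟨⟨down r hi, ?_, ?_, ?_⟩, ⟨lo, ?_, ?_, ?_⟩⟩⟩, ?_⟩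
  · constructor
    · rw [down, List.pairwise_map]
      refine hipair.imp_of_mem ?_
      intro p q hp hq hrel
      have h1 := hhif p hp
      have h2 := hhif q hq
      rcases hrel with ⟨ha, hb | hb⟩
      · exact ⟨by omega, Or.inl (by omega)⟩
      · exact ⟨by omega, Or.inr (by omega)⟩
    · intro p hp
      rcases List.mem_map.mp hp with ⟨q, hq, rfl⟩
      have := hhif q hq
      simp only
      omega
  · simp [down]
  · intro p hp
    have hp' := List.mem_of_mem_head? hp
    rcases List.mem_map.mp hp' with ⟨q, hq, rfl⟩
    have := hhif q hq
    simp only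
    omega
  · exact ⟨lopair, fun p hp => hv.2 p (List.mem_cons_of_mem _ (hlomem p hp))⟩
  · show lo.length = s - hi.length
    omega
  · intro p hp
    have := head?_dropWhile (p := pb) (l := t) p hp
    simpa [hpb] using this
  · apply Subtype.ext
    simp only [bwd, bwdList]
    have hce : c - 1 + 1 = c := by omega
    rw [hce]
    congr 1
    have hud : up r (down r hi) = hi := by
      rw [up, down, List.map_map]
      have : ∀ q ∈ hi, ((q.1 - r + r), (q.2 - r + r)) = q := by
        intro q hq
        have := hhif q hq
        exact Prod.ext (by omega) (by omega)
      calc hi.map ((fun p : Col => (p.1 + r, p.2 + r)) ∘ fun p : Col => (p.1 - r, p.2 - r))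
          = hi.map id := List.map_congr_left (fun q hq => this q hq)
        _ = hi := List.map_id hi
    rw [hud, hhi, hlo, List.takeWhile_append_dropWhile]

lemma nat_card_sigma {ι : Type} [Fintype ι] (β : ι → Type) [∀ i, Finite (β i)] :
    Nat.card ((i : ι) × β i) = ∑ i, Nat.card (β i) := by
  letI := fun i => Fintype.ofFinite (β i)
  simp only [Nat.card_eq_fintype_card, Fintype.card_sigma]

lemma card_PT (s : ℕ) : ∀ h, Nat.card (PT s h) = G s h := by
  induction s using Nat.strong_induction_on with
  | _ s ih =>
    match s with
    | 0 => intro h; rw [card_PT_zero]; simp [G]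
    | s+1 =>
      intro h
      have hbij : Function.Bijective (bwd s h) := ⟨bwd_injective s h, bwd_surjective s h⟩
      rw [← Nat.card_eq_of_bijective _ hbij]
      show Nat.card (Σ c : Fin h, Σ r : Fin (c.1+1), Σ a : Fin (s+1),
        PT a.1 (c.1+1 - r.1) × PT (s - a.1) r.1) = _
      rw [nat_card_sigma, G]
      refine Finset.sum_congr rfl fun c _ => ?_
      rw [nat_card_sigma]
      refine Finset.sum_congr rfl fun r _ => ?_
      rw [nat_card_sigma]
      refine Finset.sum_congr rfl fun a _ => ?_
      rw [Nat.card_prod, ih a.1 (by omega) _, ih (s - a.1) (by omega) _]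

end CatalanTab

namespace CatalanTab
open Finset

lemma G_zero_left (h : ℕ) : G 0 h = 1 := by rw [G]

lemma G_zero (s : ℕ) : G s 0 = if s = 0 then 1 else 0 := by
  match s with
  | 0 => rw [G]; rfl
  | s+1 => rw [G]; simp

lemma G_succ_eq (s h : ℕ) : G (s+1) h = ∑ c ∈ range h, ∑ r ∈ range (c+1),
    ∑ a ∈ range (s+1), G a (c+1-r) * G (s-a) r := by
  rw [G]
  trans ∑ c : Fin h, ∑ r : Fin (c.1+1), ∑ a ∈ range (s+1), G a (c.1+1-r.1) * G (s-a) r.1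
  · exact Finset.sum_congr rfl fun c _ => Finset.sum_congr rfl fun r _ =>
      Fin.sum_univ_eq_sum_range (fun a => G a (c.1+1-r.1) * G (s-a) r.1) (s+1)
  trans ∑ c : Fin h, ∑ r ∈ range (c.1+1), ∑ a ∈ range (s+1), G a (c.1+1-r) * G (s-a) r
  · exact Finset.sum_congr rfl fun c _ =>
      Fin.sum_univ_eq_sum_range (fun r => ∑ a ∈ range (s+1), G a (c.1+1-r) * G (s-a) r) (c.1+1)
  exact Fin.sum_univ_eq_sum_range (fun c => ∑ r ∈ range (c+1), ∑ a ∈ range (s+1), G a (c+1-r) * G (s-a) r) h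

lemma G_succ_succ (s h : ℕ) : G (s+1) (h+1) = G (s+1) h +
    ∑ r ∈ range (h+1), ∑ a ∈ range (s+1), G a (h+1-r) * G (s-a) r := by
  rw [G_succ_eq, G_succ_eq, Finset.sum_range_succ]

/-- total count of index-`n` tableaux. -/
def T (n : ℕ) : ℕ := ∑ a ∈ range n, G a (n-a)

def P (q : ℕ) : ℕ := ∑ b ∈ range (q+1), G b (q-b)

lemma T_zero : T 0 = 0 := by simp [T]

lemma T_one : T 1 = 1 := by simp [T, G_zero_left]

lemma P_eq (q : ℕ) : P q = T q + if q = 0 then 1 else 0 := by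
  rw [P, Finset.sum_range_succ, Nat.sub_self, G_zero, T]

lemma sum_triangle (F : ℕ → ℕ → ℕ) (N : ℕ) :
    ∑ b ∈ range N, ∑ r ∈ range (N-b), F b r
      = ∑ j ∈ range N, ∑ b ∈ range (j+1), F b (j-b) := by
  induction N with
  | zero => simp
  | succ N ih =>
    rw [Finset.sum_range_succ (f := fun b => ∑ r ∈ range (N+1-b), F b r),
        Finset.sum_range_succ (f := fun j => ∑ b ∈ range (j+1), F b (j-b)), ← ih]
    have h1 : ∀ b ∈ range N, ∑ r ∈ range (N+1-b), F b r
        = (∑ r ∈ range (N-b), F b r) + F b (N-b) := by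
      intro b hb
      rw [Finset.mem_range] at hb
      have he : N+1-b = (N-b)+1 := by omega
      rw [he, Finset.sum_range_succ]
    rw [Finset.sum_congr rfl h1, Finset.sum_add_distrib]
    have h2 : N+1-N = 1 := by omega
    rw [h2, Finset.sum_range_one, Finset.sum_range_succ (f := fun b => F b (N-b)),
      Nat.sub_self]
    omega

lemma sum_triangle_swap (F : ℕ → ℕ → ℕ) (N : ℕ) :
    ∑ b ∈ range N, ∑ r ∈ range (N-b), F b r
      = ∑ r ∈ range N, ∑ b ∈ range (N-r), F b r := by
  rw [sum_triangle F N, sum_triangle (fun r b => F b r) N]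
  refine Finset.sum_congr rfl fun j hj => ?_
  rw [Finset.mem_range] at hj
  rw [← Finset.sum_range_reflect (fun b => F b (j-b)) (j+1)]
  refine Finset.sum_congr rfl fun b hb => ?_
  rw [Finset.mem_range] at hb
  have h1 : j + 1 - 1 - b = j - b := by omega
  rw [h1]
  congr 1
  omega

lemma T_step (m : ℕ) : T (m+2) = T (m+1) + ∑ p ∈ range (m+2), T p * P (m+1-p) := by
  have h1 : T (m+2) = (∑ s ∈ range (m+1), G (s+1) (m+1-s)) + 1 := by
    rw [T, Finset.sum_range_succ' (fun a => G a (m+2-a)) (m+1)]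
    rw [show m+2-0 = m+2 from rfl, G_zero_left]
    congr 1
    refine Finset.sum_congr rfl fun s hs => ?_
    rw [Finset.mem_range] at hs
    have he : m+2-(s+1) = m+1-s := by omega
    rw [he]
  have h3 : T (m+1) = (∑ s ∈ range m, G (s+1) (m-s)) + 1 := by
    rw [T, Finset.sum_range_succ' (fun a => G a (m+1-a)) m]
    rw [show m+1-0 = m+1 from rfl, G_zero_left]
    congr 1
    refine Finset.sum_congr rfl fun s hs => ?_
    rw [Finset.mem_range] at hs
    have he : m+1-(s+1) = m-s := by omega
    rw [he]
  have h2 : ∀ s ∈ range (m+1), G (s+1) (m+1-s) = G (s+1) (m-s) +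
      ∑ r ∈ range (m+1-s), ∑ a ∈ range (s+1), G a (m+1-s-r) * G (s-a) r := by
    intro s hs
    rw [Finset.mem_range] at hs
    have he : m+1-s = (m-s)+1 := by omega
    rw [he, G_succ_succ]
  have h4 : (∑ s ∈ range (m+1), G (s+1) (m-s)) = ∑ s ∈ range m, G (s+1) (m-s) := by
    rw [Finset.sum_range_succ, Nat.sub_self, G_zero]
    simp
  set U := ∑ s ∈ range (m+1), ∑ r ∈ range (m+1-s), ∑ a ∈ range (s+1),
      G a (m+1-s-r) * G (s-a) r with hU
  have hstep : T (m+2) = T (m+1) + U := by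
    rw [h1, Finset.sum_congr rfl h2, Finset.sum_add_distrib, h4, ← hU, h3]
    omega
  rw [hstep]
  congr 1
  -- Step A: swap the two inner sums
  have hA : U = ∑ s ∈ range (m+1), ∑ a ∈ range (s+1), ∑ r ∈ range (m+1-s),
      G a (m+1-s-r) * G (s-a) r := by
    rw [hU]
    exact Finset.sum_congr rfl fun s _ => Finset.sum_comm
  -- Step B: triangle on (s, a) with k = s - a
  set F1 : ℕ → ℕ → ℕ := fun a k => ∑ r ∈ range (m+1-(a+k)), G a (m+1-(a+k)-r) * G k r
    with hF1
  have hB : U = ∑ a ∈ range (m+1), ∑ k ∈ range (m+1-a), F1 a k := by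
    rw [hA]
    have hc : ∀ s ∈ range (m+1), (∑ a ∈ range (s+1), ∑ r ∈ range (m+1-s),
        G a (m+1-s-r) * G (s-a) r) = ∑ a ∈ range (s+1), F1 a (s-a) := by
      intro s hs
      refine Finset.sum_congr rfl fun a ha => ?_
      rw [Finset.mem_range] at hs ha
      rw [hF1]
      simp only
      have he : a + (s - a) = s := by omega
      rw [he]
    rw [Finset.sum_congr rfl hc, ← sum_triangle F1 (m+1)]
  -- Step C: triangle on (k, r) inside, for each a
  have hC : U = ∑ a ∈ range (m+1), ∑ j ∈ range (m+1-a), G a (m+1-a-j) * P j := by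
    rw [hB]
    refine Finset.sum_congr rfl fun a ha => ?_
    rw [Finset.mem_range] at ha
    have hF1' : ∀ k ∈ range (m+1-a), F1 a k
        = ∑ r ∈ range (m+1-a-k), G a (m+1-a-k-r) * G k r := by
      intro k hk
      rw [Finset.mem_range] at hk
      rw [hF1]
      simp only
      have he : m+1-(a+k) = m+1-a-k := by omega
      rw [he]
    rw [Finset.sum_congr rfl hF1',
      sum_triangle (fun k r => G a (m+1-a-k-r) * G k r) (m+1-a)]
    refine Finset.sum_congr rfl fun j hj => ?_
    rw [Finset.mem_range] at hj
    rw [P, Finset.mul_sum]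
    refine Finset.sum_congr rfl fun k hk => ?_
    rw [Finset.mem_range] at hk
    have he : m+1-a-k-(j-k) = m+1-a-j := by omega
    rw [he]
  -- Step D: swap (a, j) and recognize T
  have hD : U = ∑ j ∈ range (m+1), T (m+1-j) * P j := by
    rw [hC, sum_triangle_swap (fun a j => G a (m+1-a-j) * P j) (m+1)]
    refine Finset.sum_congr rfl fun j hj => ?_
    rw [Finset.mem_range] at hj
    rw [T, Finset.sum_mul]
    refine Finset.sum_congr rfl fun a ha => ?_
    rw [Finset.mem_range] at ha
    have he : m+1-j-a = m+1-a-j := by omega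
    rw [he]
  -- Step E: reflect
  rw [hD, Finset.sum_range_succ' (fun p => T p * P (m+1-p)) (m+1), T_zero]
  rw [← Finset.sum_range_reflect (fun j => T (m+1-j) * P j) (m+1)]
  simp only [zero_mul, add_zero]
  refine Finset.sum_congr rfl fun j hj => ?_
  rw [Finset.mem_range] at hj
  have e1 : m+1-(m+1-1-j) = j+1 := by omega
  have e2 : m+1-1-j = m-j := by omega
  have e3 : m+1-(j+1) = m-j := by omega
  rw [e2, e3, show m+1-(m-j) = j+1 by omega]

lemma T_catalan : ∀ n, T (n+1) = catalan (n+1) := by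
  intro n
  induction n using Nat.strong_induction_on with
  | _ n ih =>
    match n with
    | 0 => rw [T_one, catalan_one]
    | m+1 =>
      rw [T_step m]
      have hT : T (m+1) = catalan (m+1) := ih m (by omega)
      have hsum : (∑ p ∈ range (m+2), T p * P (m+1-p)) + catalan (m+1)
          = catalan (m+2) := by
        rw [show (m+2) = (m+1)+1 from rfl, catalan_succ (m+1),
          Fin.sum_univ_eq_sum_range (fun i => catalan i * catalan (m+1-i)) (m+2),
          Finset.sum_range_succ' (fun p => T p * P (m+1-p)) (m+1),
          Finset.sum_range_succ' (fun i => catalan i * catalan (m+1-i)) (m+1)]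
        rw [T_zero, zero_mul, add_zero, catalan_zero, one_mul,
          show m+1-0 = m+1 from rfl]
        congr 1
        refine Finset.sum_congr rfl fun p hp => ?_
        rw [Finset.mem_range] at hp
        have h1 : T (p+1) = catalan (p+1) := ih p (by omega)
        have he : m+1-(p+1) = m-p := by omega
        rw [he, h1]
        congr 1
        rw [P_eq]
        match hmp : m-p with
        | 0 => rw [T_zero, catalan_zero]; simp
        | q+1 =>
          rw [if_neg (by omega), ih q (by omega), add_zero]
      have he : m+1+1 = m+2 := by omega
      rw [he]
      omega

end CatalanTab

namespace CatalanTab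
open Finset

def heights (c₀ : ℕ) (l : List Col) : ℕ → ℕ
  | 0 => c₀
  | j+1 => ((l[j]?).map Prod.fst).getD 0

lemma heights_succ_lt (c₀ : ℕ) (l : List Col) {j : ℕ} (hj : j < l.length) :
    heights c₀ l (j+1) = (l[j]'hj).1 := by
  simp [heights, List.getElem?_eq_getElem hj]

lemma heights_succ_ge (c₀ : ℕ) (l : List Col) {j : ℕ} (hj : l.length ≤ j) :
    heights c₀ l (j+1) = 0 := by
  simp [heights, List.getElem?_eq_none hj]

lemma heights_le {c₀ : ℕ} {l : List Col} (hb : ∀ p ∈ l, p.1 ≤ c₀) :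
    ∀ j, heights c₀ l j ≤ c₀ := by
  intro j
  match j with
  | 0 => exact le_refl _
  | j+1 =>
    by_cases hj : j < l.length
    · rw [heights_succ_lt c₀ l hj]
      exact hb _ (List.getElem_mem hj)
    · rw [heights_succ_ge c₀ l (by omega)]
      omega

lemma heights_pos {c₀ : ℕ} {l : List Col} (h1 : 1 ≤ c₀) (hv : Valid l) :
    ∀ j ≤ l.length, 0 < heights c₀ l j := by
  intro j hj
  match j with
  | 0 => exact h1
  | j+1 =>
    have hj' : j < l.length := by omega
    rw [heights_succ_lt c₀ l hj']
    have := hv.2 _ (List.getElem_mem hj')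
    omega

lemma heights_anti {c₀ : ℕ} {l : List Col} (hv : Valid l)
    (hb : ∀ p ∈ l, p.1 ≤ c₀) :
    ∀ j j', j ≤ j' → heights c₀ l j' ≤ heights c₀ l j := by
  intro j j' hjj
  match j' with
  | 0 =>
    have : j = 0 := by omega
    subst this; exact le_refl _
  | j'+1 =>
    by_cases hj' : j' < l.length
    · rw [heights_succ_lt c₀ l hj']
      match j with
      | 0 => exact hb _ (List.getElem_mem hj')
      | j+1 =>
        have hj : j < l.length := by omega
        rw [heights_succ_lt c₀ l hj]
        rcases Nat.eq_or_lt_of_le (show j ≤ j' by omega) with rfl | hlt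
        · exact le_refl _
        · exact ((List.pairwise_iff_getElem.mp hv.1) j j' hj hj' hlt).1
    · rw [heights_succ_ge c₀ l (by omega)]
      omega

def buildCells (c₀ : ℕ) (l : List Col) : Finset (ℕ × ℕ) :=
  (range c₀ ×ˢ range (l.length+1)).filter fun q => q.1 < heights c₀ l q.2

lemma mem_buildCells {c₀ : ℕ} {l : List Col} (hb : ∀ p ∈ l, p.1 ≤ c₀)
    {q : ℕ × ℕ} : q ∈ buildCells c₀ l ↔ q.1 < heights c₀ l q.2 := by
  rw [buildCells, Finset.mem_filter, Finset.mem_product, Finset.mem_range,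
    Finset.mem_range]
  constructor
  · exact fun h => h.2
  · intro h
    refine ⟨⟨lt_of_lt_of_le h (heights_le hb q.2), ?_⟩, h⟩
    by_contra hc
    rw [show q.2 = (q.2-1)+1 by omega, heights_succ_ge c₀ l (by omega)] at h
    omega

def buildShape {c₀ : ℕ} {l : List Col} (hv : Valid l)
    (hb : ∀ p ∈ l, p.1 ≤ c₀) : YoungDiagram where
  cells := buildCells c₀ l
  isLowerSet := by
    intro a b hab hamem
    rw [Finset.mem_coe, mem_buildCells hb] at *
    calc b.1 ≤ a.1 := hab.1
      _ < heights c₀ l a.2 := hamem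
      _ ≤ heights c₀ l b.2 := heights_anti hv hb b.2 a.2 hab.2

lemma mem_buildShape {c₀ : ℕ} {l : List Col} (hv : Valid l)
    (hb : ∀ p ∈ l, p.1 ≤ c₀) {q : ℕ × ℕ} :
    q ∈ buildShape hv hb ↔ q.1 < heights c₀ l q.2 := by
  rw [← YoungDiagram.mem_cells]
  exact mem_buildCells hb

lemma colLen_eq_of {μ : YoungDiagram} {j k : ℕ}
    (hmem : ∀ i, (i, j) ∈ μ ↔ i < k) : μ.colLen j = k := by
  rcases Nat.lt_trichotomy (μ.colLen j) k with h | h | h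
  · have := (hmem _).mpr h
    rw [YoungDiagram.mem_iff_lt_colLen] at this
    omega
  · exact h
  · have := YoungDiagram.mem_iff_lt_colLen.mpr h
    rw [hmem] at this
    omega

lemma rowLen_eq_of {μ : YoungDiagram} {i k : ℕ}
    (hmem : ∀ j, (i, j) ∈ μ ↔ j < k) : μ.rowLen i = k := by
  rcases Nat.lt_trichotomy (μ.rowLen i) k with h | h | h
  · have := (hmem _).mpr h
    rw [YoungDiagram.mem_iff_lt_rowLen] at this
    omega
  · exact h
  · have := YoungDiagram.mem_iff_lt_rowLen.mpr h
    rw [hmem] at this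
    omega

lemma colLen_buildShape {c₀ : ℕ} {l : List Col} (hv : Valid l)
    (hb : ∀ p ∈ l, p.1 ≤ c₀) (j : ℕ) :
    (buildShape hv hb).colLen j = heights c₀ l j :=
  colLen_eq_of fun i => mem_buildShape hv hb

lemma rowLen_buildShape {c₀ : ℕ} {l : List Col} (h1 : 1 ≤ c₀) (hv : Valid l)
    (hb : ∀ p ∈ l, p.1 ≤ c₀) :
    (buildShape hv hb).rowLen 0 = l.length + 1 :=
  rowLen_eq_of fun j => by
    rw [mem_buildShape hv hb]
    show 0 < heights c₀ l j ↔ _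
    constructor
    · intro h
      by_contra hc
      rw [show j = (j-1)+1 by omega, heights_succ_ge c₀ l (by omega)] at h
      omega
    · intro h
      exact heights_pos h1 hv j (by omega)

def fill (l : List Col) : ℕ × ℕ → Bool := fun q =>
  match q.2 with
  | 0 => false
  | j+1 =>
    match l[j]? with
    | some p => q.1 == p.2
    | none => false

lemma fill_zero (l : List Col) (i : ℕ) : fill l (i, 0) = false := rfl

lemma fill_succ_lt (l : List Col) (i : ℕ) {j : ℕ} (hj : j < l.length) :
    fill l (i, j+1) = (i == (l[j]'hj).2) := by
  simp [fill, List.getElem?_eq_getElem hj]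

lemma fill_succ_ge (l : List Col) (i : ℕ) {j : ℕ} (hj : l.length ≤ j) :
    fill l (i, j+1) = false := by
  simp [fill, List.getElem?_eq_none hj]

lemma fill_true {l : List Col} {i j : ℕ} (h : fill l (i, j) = true) :
    ∃ (j' : ℕ) (hj' : j' < l.length), j = j'+1 ∧ i = (l[j']'hj').2 := by
  match j with
  | 0 => exact absurd h (by simp [fill_zero])
  | j+1 =>
    by_cases hj : j < l.length
    · rw [fill_succ_lt l i hj] at h
      exact ⟨j, hj, rfl, by simpa using h⟩
    · rw [fill_succ_ge l i (by omega)] at h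
      exact absurd h (by simp)

def build {c₀ : ℕ} {l : List Col} (h1 : 1 ≤ c₀) (hv : Valid l)
    (hb : ∀ p ∈ l, p.1 ≤ c₀) : CatalanTableau where
  shape := buildShape hv hb
  filling := fill l
  supp := by
    intro q hq
    by_contra hne
    have ht : fill l q = true := by
      cases hfq : fill l q
      · exact absurd hfq hne
      · rfl
    have hq' : fill l (q.1, q.2) = true := ht
    obtain ⟨j', hj', hq2, hq1⟩ := fill_true hq'
    apply hq
    have hqe : q = (q.1, q.2) := rfl
    rw [hqe, mem_buildShape hv hb]
    show q.1 < heights c₀ l q.2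
    rw [hq2, heights_succ_lt c₀ l hj']
    have := hv.2 _ (List.getElem_mem hj')
    omega
  shape_nonempty := ⟨(0, 0), by
    have : ((0 : ℕ), (0 : ℕ)) ∈ buildShape hv hb := by
      rw [mem_buildShape hv hb]
      exact h1
    exact this⟩
  leftCol := fun i => rfl
  colHasOne := by
    intro j hj0 hjlt
    have hjlt' : j < l.length + 1 := by
      rwa [show (buildShape hv hb : YoungDiagram).rowLen 0 = l.length + 1 from
        rowLen_buildShape h1 hv hb] at hjlt
    obtain ⟨j', rfl⟩ : ∃ j', j = j'+1 := ⟨j-1, by omega⟩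
    have hj' : j' < l.length := by omega
    refine ⟨(l[j']'hj').2, ?_, ?_⟩
    · show fill l ((l[j']'hj').2, j'+1) = true
      rw [fill_succ_lt l _ hj']
      simp
    · intro i hi
      rw [fill_succ_lt l i hj'] at hi
      simpa using hi
  noBadZero := by
    rintro i j hmem hfalse ⟨i', hi'lt, hi'⟩ ⟨j', hj'lt, hj'⟩
    obtain ⟨jj, hjj, hje, hie⟩ := fill_true hi'
    obtain ⟨jj2, hjj2, hje2, hie2⟩ := fill_true hj'
    subst hje hje2
    have hlt : jj2 < jj := by omega
    have hrel := (List.pairwise_iff_getElem.mp hv.1) jj2 jj hjj2 hjj hlt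
    rw [mem_buildShape hv hb] at hmem
    have hmem' : i < heights c₀ l (jj+1) := hmem
    rw [heights_succ_lt c₀ l hjj] at hmem'
    have hne : i ≠ (l[jj]'hjj).2 := by
      intro hcon
      rw [fill_succ_lt l i hjj] at hfalse
      simp [hcon] at hfalse
    rcases hrel.2 with hx | hx
    · omega
    · omega

lemma build_shape {c₀ : ℕ} {l : List Col} (h1 : 1 ≤ c₀) (hv : Valid l)
    (hb : ∀ p ∈ l, p.1 ≤ c₀) : (build h1 hv hb).shape = buildShape hv hb := rfl

lemma build_filling {c₀ : ℕ} {l : List Col} (h1 : 1 ≤ c₀) (hv : Valid l)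
    (hb : ∀ p ∈ l, p.1 ≤ c₀) : (build h1 hv hb).filling = fill l := rfl

lemma index_build {c₀ : ℕ} {l : List Col} (h1 : 1 ≤ c₀) (hv : Valid l)
    (hb : ∀ p ∈ l, p.1 ≤ c₀) : (build h1 hv hb).index = c₀ + l.length := by
  rw [CatalanTableau.index]
  show (buildShape hv hb).colLen 0 + (buildShape hv hb).rowLen 0 - 1 = _
  rw [colLen_buildShape hv hb, rowLen_buildShape h1 hv hb]
  show c₀ + (l.length + 1) - 1 = _
  omega

end CatalanTab

namespace CatalanTab
open Finset

lemma CT_ext {t₁ t₂ : CatalanTableau} (h1 : t₁.shape = t₂.shape)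
    (h2 : t₁.filling = t₂.filling) : t₁ = t₂ := by
  cases t₁; cases t₂
  simp only at h1 h2
  subst h1; subst h2
  rfl

lemma YD_ext {μ ν : YoungDiagram} (h : μ.cells = ν.cells) : μ = ν := by
  cases μ; cases ν
  simp only at h
  subst h
  rfl

def toCT (n : ℕ) : (Σ c : Fin n, PT (n-1-c.1) (c.1+1)) →
    {t : CatalanTableau // t.index = n}
  | ⟨c, ls⟩ => ⟨build (c₀ := c.1+1) (l := ls.1) (by omega) ls.2.1
      (fun p hp => ls.all_le' p hp), by
        rw [index_build]
        have h1 := ls.2.2.1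
        have h2 := c.2
        omega⟩

lemma toCT_injective (n : ℕ) : Function.Injective (toCT n) := by
  rintro ⟨c, x⟩ ⟨c', x'⟩ heq
  have heq' := congrArg Subtype.val heq
  simp only [toCT] at heq'
  have hsh := congrArg CatalanTableau.shape heq'
  have hfl := congrArg CatalanTableau.filling heq'
  rw [build_shape, build_shape] at hsh
  rw [build_filling, build_filling] at hfl
  have hh : ∀ j, heights (c.1+1) x.1 j = heights (c'.1+1) x'.1 j := by
    intro j
    have := congrArg (fun μ : YoungDiagram => μ.colLen j) hsh
    beta_reduce at this
    rwa [colLen_buildShape, colLen_buildShape] at this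
  have hc : c = c' := Fin.ext (by have := hh 0; simpa [heights] using this)
  subst hc
  have hlen : x.1.length = x'.1.length := by rw [x.2.2.1, x'.2.2.1]
  have hent : x.1 = x'.1 := by
    apply List.ext_getElem hlen
    intro j hj hj'
    have h1 : (x.1[j]'hj).1 = (x'.1[j]'hj').1 := by
      have := hh (j+1)
      rwa [heights_succ_lt _ _ hj, heights_succ_lt _ _ hj'] at this
    have h2 : (x.1[j]'hj).2 = (x'.1[j]'hj').2 := by
      have hf := congrArg (fun f => f ((x.1[j]'hj).2, j+1)) hfl
      beta_reduce at hf
      rw [fill_succ_lt x.1 _ hj, fill_succ_lt x'.1 _ hj'] at hf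
      simpa using hf.symm
    exact Prod.ext h1 h2
  exact congrArg _ (Subtype.ext hent)

lemma toCT_surjective (n : ℕ) (hn : 1 ≤ n) : Function.Surjective (toCT n) := by
  rintro ⟨t, ht⟩
  set m := t.shape.rowLen 0 with hm
  set c₀ := t.shape.colLen 0 with hc₀
  have h00 : (0, 0) ∈ t.shape := by
    obtain ⟨q, hq⟩ := t.shape_nonempty
    have hq' : q ∈ t.shape := hq
    have : ((0, 0) : ℕ × ℕ) ≤ q := ⟨Nat.zero_le _, Nat.zero_le _⟩
    exact t.shape.isLowerSet this hq'
  have hm1 : 1 ≤ m := by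
    rw [hm]
    have := YoungDiagram.mem_iff_lt_rowLen.mp h00
    omega
  have hc1 : 1 ≤ c₀ := by
    rw [hc₀]
    have := YoungDiagram.mem_iff_lt_colLen.mp h00
    omega
  have hsum : c₀ + m - 1 = n := ht
  -- the position of the 1 in column j'+1
  have hcol : ∀ j', j'+1 < m → ∃! i, t.filling (i, j'+1) = true :=
    fun j' hj' => t.colHasOne (j'+1) (Nat.succ_pos _) hj'
  set rfun : ℕ → ℕ := fun j' =>
    if hj' : j'+1 < m then (hcol j' hj').exists.choose else 0 with hrfun
  have rspec : ∀ j' (_ : j'+1 < m), t.filling (rfun j', j'+1) = true := by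
    intro j' hj'
    rw [hrfun]
    simp only [dif_pos hj']
    exact (hcol j' hj').exists.choose_spec
  have runiq : ∀ j' (_ : j'+1 < m) i, t.filling (i, j'+1) = true → i = rfun j' := by
    intro j' hj' i hi
    exact (hcol j' hj').unique hi (rspec j' hj')
  have hmemof : ∀ i j, t.filling (i, j) = true → (i, j) ∈ t.shape := by
    intro i j h
    by_contra hns
    rw [t.supp _ hns] at h
    simp at h
  have hrlt : ∀ j' (_ : j'+1 < m), rfun j' < t.shape.colLen (j'+1) :=
    fun j' hj' => YoungDiagram.mem_iff_lt_colLen.mp (hmemof _ _ (rspec j' hj'))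
  have hcollim : ∀ j, m ≤ j → t.shape.colLen j = 0 := by
    intro j hj
    by_contra hpos
    have h0 : (0, j) ∈ t.shape := YoungDiagram.mem_iff_lt_colLen.mpr (by omega)
    have := YoungDiagram.mem_iff_lt_rowLen.mp h0
    omega
  -- the extracted list
  set l : List Col := (List.range (m-1)).map
    (fun j => (t.shape.colLen (j+1), rfun j)) with hl
  have hllen : l.length = m - 1 := by simp [hl]
  have hlget : ∀ (j : ℕ) (hj : j < l.length),
      l[j]'hj = (t.shape.colLen (j+1), rfun j) := by
    intro j hj
    simp [hl]
  have hvl : Valid l := by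
    constructor
    · rw [List.pairwise_iff_getElem]
      intro i j hi hj hij
      rw [hlget i hi, hlget j hj]
      have him : i+1 < m := by rw [hllen] at hi; omega
      have hjm : j+1 < m := by rw [hllen] at hj; omega
      constructor
      · exact t.shape.colLen_anti (i+1) (j+1) (by omega)
      · simp only
        by_cases hle : rfun i ≤ rfun j
        · exact Or.inl hle
        · right
          by_contra hno
          push_neg at hno
          have hmem2 : (rfun i, j+1) ∈ t.shape :=
            YoungDiagram.mem_iff_lt_colLen.mpr hno
          have hfalse : t.filling (rfun i, j+1) = false := by
            cases hft : t.filling (rfun i, j+1)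
            · rfl
            · exact absurd (runiq j hjm _ hft) (by omega)
          exact t.noBadZero (rfun i) (j+1) hmem2 hfalse
            ⟨rfun j, by omega, rspec j hjm⟩
            ⟨i+1, by omega, rspec i him⟩
    · intro p hp
      obtain ⟨j, hj, rfl⟩ := List.mem_iff_getElem.mp hp
      rw [hlget j hj]
      have hjm : j+1 < m := by rw [hllen] at hj; omega
      exact hrlt j hjm
  have hbl : ∀ p ∈ l, p.1 ≤ c₀ := by
    intro p hp
    obtain ⟨j, hj, rfl⟩ := List.mem_iff_getElem.mp hp
    rw [hlget j hj]
    exact t.shape.colLen_anti 0 (j+1) (by omega)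
  have hcn : c₀ - 1 < n := by omega
  have hb2 : ∀ p ∈ l, p.1 ≤ (c₀-1)+1 := fun p hp => by have := hbl p hp; omega
  have h12 : 1 ≤ c₀-1+1 := by omega
  have hlen2 : l.length = n-1-(c₀-1) := by rw [hllen]; omega
  have hhead2 : ∀ p ∈ l.head?, p.1 ≤ (c₀-1)+1 :=
    fun p hp => hb2 p (List.mem_of_mem_head? hp)
  have hheq : ∀ j, heights (c₀-1+1) l j = t.shape.colLen j := by
    intro j
    match j with
    | 0 =>
      show c₀-1+1 = _
      omega
    | j+1 =>
      by_cases hj : j < l.length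
      · rw [heights_succ_lt _ l hj, hlget j hj]
      · rw [heights_succ_ge _ l (by omega)]
        rw [hllen] at hj
        exact (hcollim (j+1) (by omega)).symm
  refine ⟨⟨⟨c₀-1, hcn⟩, ⟨l, hvl, hlen2, hhead2⟩⟩, ?_⟩
  apply Subtype.ext
  have hred : (toCT n ⟨⟨c₀-1, hcn⟩, ⟨l, hvl, hlen2, hhead2⟩⟩).val
      = build (c₀ := c₀-1+1) h12 hvl hb2 := rfl
  rw [hred]
  apply CT_ext
  · rw [build_shape]
    apply YD_ext
    apply Finset.ext
    rintro ⟨i, j⟩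
    rw [show (buildShape hvl hb2).cells = buildCells (c₀-1+1) l from rfl]
    rw [mem_buildCells hb2]
    show i < heights (c₀-1+1) l j ↔ _
    rw [hheq j, YoungDiagram.mem_cells, YoungDiagram.mem_iff_lt_colLen]
  · rw [build_filling]
    funext q
    obtain ⟨i, j⟩ := q
    match j with
    | 0 => rw [fill_zero, t.leftCol]
    | j+1 =>
      by_cases hj : j < l.length
      · rw [fill_succ_lt l i hj, hlget j hj]
        have hjm : j+1 < m := by rw [hllen] at hj; omega
        by_cases hi : i = rfun j
        · subst hi
          rw [rspec j hjm]
          simp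
        · have : t.filling (i, j+1) = false := by
            cases hft : t.filling (i, j+1)
            · rfl
            · exact absurd (runiq j hjm _ hft) hi
          rw [this]
          simp [hi]
      · rw [fill_succ_ge l i (by omega)]
        rw [hllen] at hj
        cases hft : t.filling (i, j+1)
        · rfl
        · have := hmemof _ _ hft
          have h0 : (0, j+1) ∈ t.shape := t.shape.isLowerSet
            (show ((0:ℕ), j+1) ≤ (i, j+1) from ⟨Nat.zero_le _, le_refl _⟩) this
          have := YoungDiagram.mem_iff_lt_rowLen.mp h0
          omega

end CatalanTab


/-- the number of Catalan tableaux of index `n` is the Catalan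
number `C_n`. -/
theorem catalanTableau_card (n : ℕ) (hn : 1 ≤ n) :
    Nat.card {t : CatalanTableau // t.index = n} = catalan n := by
  obtain ⟨m, rfl⟩ : ∃ m, n = m + 1 := ⟨n-1, by omega⟩
  have hbij : Function.Bijective (CatalanTab.toCT (m+1)) :=
    ⟨CatalanTab.toCT_injective _, CatalanTab.toCT_surjective _ (by omega)⟩
  rw [← Nat.card_eq_of_bijective _ hbij]
  rw [CatalanTab.nat_card_sigma]
  rw [Finset.sum_congr rfl (fun (c : Fin (m+1)) _ => CatalanTab.card_PT (m+1-1-c.1) (c.1+1))]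
  rw [Fin.sum_univ_eq_sum_range (fun c => CatalanTab.G (m+1-1-c) (c+1)) (m+1)]
  rw [← CatalanTab.T_catalan m, CatalanTab.T]
  rw [← Finset.sum_range_reflect (fun a => CatalanTab.G a (m+1-a)) (m+1)]
  refine Finset.sum_congr rfl fun j hj => ?_
  rw [Finset.mem_range] at hj
  have e1 : m+1-1-j = m-j := by omega
  rw [e1]
  congr 1
  omega
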